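/- Let G be a finitely generated residually finite group. Then the integral group ring ℤ[G] is residually finite as a ring: for every nonzero r ∈ ℤ[G] there exists a finite (nontrivial) ring S and a ring homomorphism π : ℤ[G] → S with π(r) ≠ 0. -/

import Mathlib

theorem groupRing_residually_finite
    {G : Type*} [Group G] (hfg : Group.FG G)
    (hrf : ∀ g : G, g ≠ 1 →
      ∃ (H : Type) (_ : Group H) (_ : Finite H) (φ : G →* H), φ g ≠ 1) :
    ∀ r : MonoidAlgebra ℤ G, r ≠ 0 →
      ∃ (S : Type) (_ : Ring S) (_ : Finite S) (_ : Nontrivial S)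
        (π : MonoidAlgebra ℤ G →+* S), π r ≠ 0 := by
  intro r hr
  classical
  set ι : Type _ := {p : (↥r.coeff.support) × (↥r.coeff.support) // (p.1 : G) ≠ (p.2 : G)} with hι
  have hpair : ∀ p : ι, ∃ (H : Type) (_ : Group H) (_ : Finite H) (φ : G →* H),
      φ ((p.1.1 : G) * (p.1.2 : G)⁻¹) ≠ 1 := by
    intro p
    exact hrf _ (fun h => p.2 (mul_inv_eq_one.mp h))
  choose Hf instGf instFf φf hφf using hpair
  letI : ∀ p : ι, Group (Hf p) := instGf
  haveI : ∀ p : ι, Finite (Hf p) := instFf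
  haveI : Finite ι := by
    have : Finite ((↥r.coeff.support) × (↥r.coeff.support)) := by infer_instance
    exact Subtype.finite
  obtain ⟨k, ⟨e⟩⟩ := Finite.exists_equiv_fin ι
  let H : Type := ∀ i : Fin k, Hf (e.symm i)
  let ψ : ∀ i : Fin k, G →* Hf (e.symm i) := fun i => φf (e.symm i)
  haveI : Finite H := Pi.finite
  let φ : G →* H :=
    { toFun := fun g i => ψ i g
      map_one' := funext fun i => map_one _
      map_mul' := fun a b => funext fun i => map_mul _ _ _ }
  have hinj : Set.InjOn φ ↑r.coeff.support := by
    intro a ha b hb hab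
    by_contra hne
    have hp : ((⟨a, ha⟩ : ↥r.coeff.support) : G) ≠ ((⟨b, hb⟩ : ↥r.coeff.support) : G) := hne
    let p : ι := ⟨(⟨a, ha⟩, ⟨b, hb⟩), hp⟩
    have h1 : φf (e.symm (e p)) a = φf (e.symm (e p)) b := congrFun hab (e p)
    have h2 : φf (e.symm (e p)) (a * b⁻¹) = 1 := by
      rw [map_mul, map_inv, h1, mul_inv_cancel]
    rw [e.symm_apply_apply] at h2
    exact hφf p h2
  obtain ⟨a₀, ha₀⟩ := Finsupp.support_nonempty_iff.mpr (mt MonoidAlgebra.coeff_eq_zero.mp hr)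
  have hc : r.coeff a₀ ≠ 0 := Finsupp.mem_support_iff.mp ha₀
  set n : ℕ := (r.coeff a₀).natAbs + 1 with hn
  haveI : Fact (1 < n) := ⟨by
    have : 1 ≤ (r.coeff a₀).natAbs := Nat.one_le_iff_ne_zero.mpr (Int.natAbs_ne_zero.mpr hc)
    omega⟩
  haveI : NeZero n := ⟨by omega⟩
  refine ⟨MonoidAlgebra (ZMod n) H, inferInstance, ?_, inferInstance, ?_, ?_⟩
  · exact Finite.of_injective (fun f : MonoidAlgebra (ZMod n) H => ⇑(f.coeff : H →₀ ZMod n))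
      (fun a b h => MonoidAlgebra.coeff_injective (Finsupp.ext fun x => congrFun h x))
  · exact MonoidAlgebra.liftNCRingHom (Int.castRingHom _)
      ((MonoidAlgebra.of (ZMod n) H).comp φ)
      (fun x y => Int.cast_commute x _)
  · intro h0
    apply hc
    set π : MonoidAlgebra ℤ G →+* MonoidAlgebra (ZMod n) H :=
      MonoidAlgebra.liftNCRingHom (Int.castRingHom _)
        ((MonoidAlgebra.of (ZMod n) H).comp φ)
        (fun x y => Int.cast_commute x _) with hπ
    have hsingle : ∀ (a : G) (c : ℤ),
        π (MonoidAlgebra.single a c) = MonoidAlgebra.single (φ a) ((c : ZMod n)) := by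
      intro a c
      have h1 : π (MonoidAlgebra.single a c)
          = (Int.castRingHom (MonoidAlgebra (ZMod n) H)) c
            * ((MonoidAlgebra.of (ZMod n) H).comp φ) a :=
        MonoidAlgebra.liftNC_single _ _ a c
      rw [h1]
      show ((c : ℤ) : MonoidAlgebra (ZMod n) H) * MonoidAlgebra.single (φ a) 1 = _
      rw [MonoidAlgebra.intCast_def, MonoidAlgebra.single_mul_single, one_mul, mul_one]
    have key : π r = r.coeff.sum fun a c => MonoidAlgebra.single (φ a) ((c : ZMod n)) := by
      conv_lhs => rw [← MonoidAlgebra.sum_coeff_single r]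
      rw [map_finsuppSum]
      exact Finsupp.sum_congr fun a _ => hsingle a _
    have key2 : (π r).coeff (φ a₀) = ((r.coeff a₀ : ℤ) : ZMod n) := by
      rw [key, Finsupp.sum, MonoidAlgebra.coeff_sum, Finset.sum_apply']
      rw [Finset.sum_eq_single a₀]
      · rw [MonoidAlgebra.coeff_single, Finsupp.single_eq_same]
      · intro b hb hne
        rw [MonoidAlgebra.coeff_single]
        exact Finsupp.single_eq_of_ne' (fun heq => hne (hinj hb ha₀ heq))
      · intro h; exact absurd ha₀ h
    rw [h0] at key2
    simp only [MonoidAlgebra.coeff_zero, Finsupp.coe_zero, Pi.zero_apply] at key2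
    have hdvd := (ZMod.intCast_zmod_eq_zero_iff_dvd (r.coeff a₀) n).mp key2.symm
    have habs : (n : ℤ) ≤ |r.coeff a₀| := Int.le_of_dvd (abs_pos.mpr hc) ((dvd_abs _ _).mpr hdvd)
    have : |r.coeff a₀| = (r.coeff a₀).natAbs := Int.abs_eq_natAbs _
    omega
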